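/- Let n ≥ 1 and let x : Fin (n+1) → EuclideanSpace ℝ (Fin n) be a non-degenerate configuration, with X : Matrix (Fin (n+1)) (Fin n) ℝ the matrix with entries X i k = x i k. Then the family of matrices (A i j * X), indexed by the pairs (i, j) : Fin (n+1) × Fin (n+1) with i ≠ j, is linearly independent over ℝ; consequently, Module.finrank ℝ (Submodule.span ℝ {M | ∃ i j, i ≠ j ∧ M = A i j * X}) = n * (n + 1). -/

import Mathlib

/-- The negative of the Laplacian of the single-edge digraph `i → j`. -/
def edgeMatrix {N : ℕ} (i j : Fin N) : Matrix (Fin N) (Fin N) ℝ :=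
  Matrix.single i j 1 - Matrix.single i i 1

/-- The matrix whose `i`-th row is the point `x i`. -/
def configMatrix {N n : ℕ} (x : Fin N → EuclideanSpace ℝ (Fin n)) :
    Matrix (Fin N) (Fin n) ℝ :=
  Matrix.of fun i k => x i k

lemma edge_mul_apply {N n : ℕ} (x : Fin N → EuclideanSpace ℝ (Fin n)) (i j a : Fin N) (k : Fin n) :
    (edgeMatrix i j * configMatrix x) a k = if i = a then x j k - x i k else 0 := by
  classical
  simp only [edgeMatrix, Matrix.sub_mul, Matrix.sub_apply, Matrix.mul_apply,
    Matrix.single, Matrix.of_apply, configMatrix, ite_mul, one_mul, zero_mul, ite_and]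
  by_cases h : i = a <;> simp [h, sub_mul, Finset.sum_sub_distrib, Finset.sum_ite_eq]

lemma diff_indep {n : ℕ} (x : Fin (n + 1) → EuclideanSpace ℝ (Fin n))
    (hx : affineSpan ℝ (Set.range x) = ⊤) (a : Fin (n + 1)) :
    LinearIndependent ℝ (fun j : {j : Fin (n + 1) // j ≠ a} => x ↑j - x a) := by
  have hv : vectorSpan ℝ (Set.range x) = ⊤ := by
    rw [← direction_affineSpan, hx, AffineSubspace.direction_top]
  have hspan : Submodule.span ℝ (Set.range fun j : {j : Fin (n + 1) // j ≠ a} => x ↑j - x a) = ⊤ := by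
    rw [← hv, vectorSpan_range_eq_span_range_vsub_right_ne]
    rfl
  apply linearIndependent_of_top_le_span_of_card_eq_finrank (le_of_eq hspan.symm)
  simp [Fintype.card_subtype_compl, finrank_euclideanSpace]

theorem linearIndependent_edgeMatrix_mul_config {n : ℕ} (hn : 1 ≤ n)
    (x : Fin (n + 1) → EuclideanSpace ℝ (Fin n))
    (hx : affineSpan ℝ (Set.range x) = ⊤) :
    LinearIndependent ℝ
      (fun p : {p : Fin (n + 1) × Fin (n + 1) // p.1 ≠ p.2} =>
        edgeMatrix p.1.1 p.1.2 * configMatrix x) ∧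
    Module.finrank ℝ (Submodule.span ℝ
      {M : Matrix (Fin (n + 1)) (Fin n) ℝ |
        ∃ i j, i ≠ j ∧ M = edgeMatrix i j * configMatrix x}) = n * (n + 1) := by
  classical
  set F : {p : Fin (n + 1) × Fin (n + 1) // p.1 ≠ p.2} → Matrix (Fin (n + 1)) (Fin n) ℝ :=
    fun p => edgeMatrix p.1.1 p.1.2 * configMatrix x with hF
  let e : (Σ i : Fin (n + 1), {j : Fin (n + 1) // j ≠ i}) ≃
      {p : Fin (n + 1) × Fin (n + 1) // p.1 ≠ p.2} :=
    { toFun := fun s => ⟨(s.1, s.2.1), Ne.symm s.2.2⟩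
      invFun := fun p => ⟨p.1.1, ⟨p.1.2, Ne.symm p.2⟩⟩
      left_inv := fun s => rfl
      right_inv := fun p => rfl }
  have key : LinearIndependent ℝ (F ∘ e) := by
    rw [Fintype.linearIndependent_iff]
    intro g hg s0
    obtain ⟨a, j0⟩ := s0
    have h1 : ∀ k, ∑ j : {j : Fin (n + 1) // j ≠ a}, g ⟨a, j⟩ * (x ↑j k - x a k) = 0 := by
      intro k
      have h2 := congrFun (congrFun hg a) k
      rw [Matrix.zero_apply] at h2
      rw [Matrix.sum_apply, ] at h2
      simp only [Matrix.smul_apply, Function.comp_apply, hF, smul_eq_mul] at h2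
      rw [← Finset.univ_sigma_univ, Finset.sum_sigma] at h2
      simp only [e, Equiv.coe_fn_mk, edge_mul_apply, mul_ite, mul_zero, Finset.sum_ite_irrel,
        Finset.sum_const_zero, Finset.sum_ite_eq, Finset.sum_ite_eq', Finset.mem_univ,
        if_true] at h2
      exact h2
    have h3 : ∑ j : {j : Fin (n + 1) // j ≠ a}, g ⟨a, j⟩ • (x ↑j - x a) = 0 := by
      ext k
      rw [WithLp.ofLp_sum, Finset.sum_apply]
      simpa using h1 k
    have h4 := Fintype.linearIndependent_iff.mp (diff_indep x hx a) (fun j => g ⟨a, j⟩) h3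
    exact h4 j0
  have hLI : LinearIndependent ℝ F := (linearIndependent_equiv e).mp key
  refine ⟨hLI, ?_⟩
  have hset : {M : Matrix (Fin (n + 1)) (Fin n) ℝ |
      ∃ i j, i ≠ j ∧ M = edgeMatrix i j * configMatrix x} = Set.range F := by
    ext M
    simp only [Set.mem_setOf_eq, Set.mem_range]
    constructor
    · rintro ⟨i, j, hij, rfl⟩; exact ⟨⟨(i, j), hij⟩, rfl⟩
    · rintro ⟨⟨⟨i, j⟩, hij⟩, rfl⟩; exact ⟨i, j, hij, rfl⟩
  rw [hset, finrank_span_eq_card hLI, ← Fintype.card_congr e, Fintype.card_sigma]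
  simp [Fintype.card_subtype_compl, mul_comm]
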